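/- Let T be a locally finite tree and Γ ≤ Aut(T) a subgroup such that the quotient graph Γ\T is finite and all edge stabilizers in Γ are finite. Then the action of Γ on T fails to be k-acylindrical for every k ≥ 1 if and only if there exist h, g ∈ Γ such that: h is nontrivial and has a fixed point in T, g has no fixed point in T, and h and g commute. -/

import Mathlib

open SimpleGraph
section aux
variable {V : Type*} [DecidableEq V] {G : SimpleGraph V}




lemma aux_getVert_map {W : Type*} {G' : SimpleGraph W} (f : G →g G') {u v : V}
    (w : G.Walk u v) (i : ℕ) : (w.map f).getVert i = f (w.getVert i) := by
  induction w generalizing i with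
  | nil => simp [Walk.getVert]
  | cons h p ih =>
    cases i with
    | zero => simp
    | succ n => simpa [Walk.map_cons, Walk.getVert_cons_succ] using ih n

lemma aux_getVert_injOn {u v : V} {w : G.Walk u v} (hw : w.IsPath) :
    ∀ i ≤ w.length, ∀ j ≤ w.length, w.getVert i = w.getVert j → i = j := by
  induction w with
  | nil => intro i hi j hj _; simp at hi hj; omega
  | cons h p ih =>
    rw [Walk.cons_isPath_iff] at hw
    intro i hi j hj hij
    match i, j with
    | 0, 0 => rfl
    | 0, (j+1) =>
      exfalso
      apply hw.2
      rw [Walk.mem_support_iff_exists_getVert]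
      exact ⟨j, by simpa [Walk.getVert_cons_succ] using hij.symm,
        by simpa [Walk.length_cons] using hj⟩
    | (i+1), 0 =>
      exfalso
      apply hw.2
      rw [Walk.mem_support_iff_exists_getVert]
      exact ⟨i, by simpa [Walk.getVert_cons_succ] using hij,
        by simpa [Walk.length_cons] using hi⟩
    | (i+1), (j+1) =>
      have := ih hw.1 i (by simpa [Walk.length_cons] using hi) j
        (by simpa [Walk.length_cons] using hj)
        (by simpa [Walk.getVert_cons_succ] using hij)
      omega



lemma aux_reduced_isPath (hA : G.IsAcyclic) {u v : V} (w : G.Walk u v)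
    (hred : ∀ i, i + 2 ≤ w.length → w.getVert (i + 2) ≠ w.getVert i) : w.IsPath := by
  induction w with
  | nil => exact Walk.IsPath.nil
  | @cons u x v h p ih =>
    have hp : p.IsPath := by
      apply ih
      intro i hi
      have := hred (i + 1) (by simpa [Walk.length_cons] using by omega)
      simpa [Walk.getVert_cons_succ] using this
    rw [Walk.cons_isPath_iff]
    refine ⟨hp, fun hu => ?_⟩
    -- u is in the support of p; take the initial segment of p up to u
    have ht : (p.takeUntil u hu).IsPath := hp.takeUntil hu
    have hrev : ((p.takeUntil u hu).reverse) = Walk.cons h Walk.nil := by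
      have h1 : ((⟨(p.takeUntil u hu).reverse, ht.reverse⟩ : G.Path u x)) =
          (⟨Walk.cons h Walk.nil, by simp [Walk.cons_isPath_iff, h.ne]⟩ : G.Path u x) :=
        hA.path_unique _ _
      exact congrArg Subtype.val h1
    have ht2 : p.takeUntil u hu = Walk.cons h.symm Walk.nil := by
      have := congrArg Walk.reverse hrev
      simpa [Walk.reverse_reverse] using this
    have hspec := p.take_spec hu
    rw [ht2] at hspec
    -- p = cons h.symm (dropUntil ...)
    have hlen : 2 ≤ (Walk.cons h p).length := by
      have := congrArg Walk.length hspec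
      simp [Walk.length_append] at this
      simp [Walk.length_cons]
      omega
    have hgv : (Walk.cons h p).getVert 2 = u := by
      have : p.getVert 1 = u := by
        rw [← hspec]
        simp [Walk.getVert_cons_succ]
      simpa [Walk.getVert_cons_succ] using this
    exact hred 0 (by simpa using hlen) (by simpa using hgv)



lemma aux_path_length_eq_dist (hA : G.IsAcyclic) {u v : V} {w : G.Walk u v}
    (hw : w.IsPath) : w.length = G.dist u v := by
  obtain ⟨p, hp, hplen⟩ := (Walk.reachable w).exists_path_of_dist
  have : (⟨w, hw⟩ : G.Path u v) = ⟨p, hp⟩ := hA.path_unique _ _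
  rw [show w = p from congrArg Subtype.val this, hplen]

lemma aux_dist_getVert_le (hc : G.Connected) {u v : V} (w : G.Walk u v) :
    ∀ i j, i ≤ j → j ≤ w.length → G.dist (w.getVert i) (w.getVert j) ≤ j - i := by
  intro i j hij hjl
  induction j, hij using Nat.le_induction with
  | base => simp
  | succ j hij ih =>
    have hadj : G.Adj (w.getVert j) (w.getVert (j + 1)) :=
      w.adj_getVert_succ (by omega)
    have h1 : G.dist (w.getVert j) (w.getVert (j+1)) ≤ 1 :=
      dist_le (Walk.cons hadj Walk.nil)
    have h2 := ih (by omega)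
    have htri := hc.dist_triangle (u := w.getVert i) (v := w.getVert j)
      (w := w.getVert (j+1))
    omega

lemma aux_walkOfFn (p : ℕ → V) (j d : ℕ)
    (hadj : ∀ s, s < d → G.Adj (p (j + s)) (p (j + s + 1))) :
    ∃ w : G.Walk (p j) (p (j + d)), w.length = d ∧ ∀ s ≤ d, w.getVert s = p (j + s) := by
  induction d generalizing j with
  | zero => exact ⟨Walk.nil, by simp, by intro s hs; simp at hs; simp [hs]⟩
  | succ d ih =>
    obtain ⟨w', hlen, hgv⟩ := ih (j + 1) (fun s hs => by
      have := hadj (s + 1) (by omega)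
      simpa [Nat.add_assoc, Nat.add_comm, Nat.add_left_comm] using this)
    refine ⟨Walk.cons (by simpa using hadj 0 (by omega))
      (w'.copy rfl (by congr 1; omega)), by simpa [Walk.length_cons] using by omega, ?_⟩
    intro s hs
    cases s with
    | zero => simp
    | succ s =>
      rw [Walk.getVert_cons_succ, Walk.getVert_copy, hgv s (by omega)]
      congr 1
      omega



lemma aux_ray (hc : G.Connected) (hA : G.IsAcyclic) (q : ℕ → V)
    (hadj : ∀ t, G.Adj (q t) (q (t + 1))) (hred : ∀ t, q (t + 2) ≠ q t) (n : ℕ) :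
    G.dist (q 0) (q n) = n := by
  obtain ⟨w, hlen, hgv⟩ := aux_walkOfFn (G := G) q 0 n (fun s _ => by simpa using hadj s)
  have hpath : w.IsPath := by
    apply aux_reduced_isPath hA
    intro i hi
    rw [hgv (i+2) (by omega), hgv i (by omega)]
    simpa using hred i
  have := aux_path_length_eq_dist hA hpath
  simpa [hlen] using this.symm

variable {Γ : Type*} [Group Γ] [MulAction Γ V]

/-- The graph hom given by the action of `γ`. -/
def auxHom (hAdj : ∀ (γ : Γ) (u v : V), G.Adj u v → G.Adj (γ • u) (γ • v)) (γ : Γ) :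
    G →g G := ⟨fun x => γ • x, fun h => hAdj γ _ _ h⟩

lemma aux_dist_smul (hc : G.Connected)
    (hAdj : ∀ (γ : Γ) (u v : V), G.Adj u v → G.Adj (γ • u) (γ • v)) (γ : Γ) (u v : V) :
    G.dist (γ • u) (γ • v) = G.dist u v := by
  have key : ∀ (δ : Γ) (a b : V), G.dist (δ • a) (δ • b) ≤ G.dist a b := by
    intro δ a b
    obtain ⟨w, hw⟩ := (hc.preconnected a b).exists_walk_length_eq_dist
    calc G.dist (δ • a) (δ • b) ≤ (w.map (auxHom hAdj δ)).length := dist_le _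
    _ = G.dist a b := by rw [Walk.length_map, hw]
  refine le_antisymm (key γ u v) ?_
  have := key γ⁻¹ (γ • u) (γ • v)
  simpa [inv_smul_smul] using this

lemma aux_growth (hc : G.Connected) (hA : G.IsAcyclic)
    (hAdj : ∀ (γ : Γ) (u v : V), G.Adj u v → G.Adj (γ • u) (γ • v))
    (g : Γ) (a : V) (A : G.Walk a (g • a)) (hAp : A.IsPath) (hL : 1 ≤ A.length)
    (hcoh : A.getVert (A.length - 1) ≠ g • A.getVert 1) (m : ℕ) :
    G.dist a (g ^ m • a) = m * A.length := by
  set L := A.length with hLdef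
  set q : ℕ → V := fun t => g ^ (t / L) • A.getVert (t % L) with hq
  have hL0 : 0 < L := hL
  have hqform : ∀ c r, r ≤ L → q (L * c + r) = g ^ c • A.getVert r := by
    intro c r hr
    rcases lt_or_eq_of_le hr with hr' | rfl
    · simp only [hq]
      rw [Nat.mul_add_div hL0, Nat.mul_add_mod, Nat.mod_eq_of_lt hr',
        Nat.div_eq_of_lt hr', Nat.add_zero]
    · have : L * c + L = L * (c + 1) + 0 := by ring
      rw [this]
      simp only [hq]
      rw [Nat.mul_add_div hL0, Nat.mul_add_mod]
      have hgl : A.getVert L = g • a := by rw [hLdef]; exact A.getVert_length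
      simp [hgl, pow_succ, mul_smul]
  have hdecomp : ∀ t : ℕ, t = L * (t / L) + t % L := fun t => (Nat.div_add_mod t L).symm
  have hadj : ∀ t, G.Adj (q t) (q (t + 1)) := by
    intro t
    have hd := hdecomp t
    have hr : t % L < L := Nat.mod_lt _ hL0
    have h1 : q t = g ^ (t / L) • A.getVert (t % L) := by
      conv_lhs => rw [hdecomp t]
      exact hqform _ _ (le_of_lt hr)
    have h2 : q (t + 1) = g ^ (t / L) • A.getVert (t % L + 1) := by
      conv_lhs => rw [show t + 1 = L * (t / L) + (t % L + 1) by omega]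
      exact hqform _ _ (by omega)
    rw [h1, h2]
    exact hAdj _ _ _ (A.adj_getVert_succ hr)
  have hred : ∀ t, q (t + 2) ≠ q t := by
    intro t
    have hd := hdecomp t
    have hr : t % L < L := Nat.mod_lt _ hL0
    have h1 : q t = g ^ (t / L) • A.getVert (t % L) := by
      conv_lhs => rw [hdecomp t]
      exact hqform _ _ (le_of_lt hr)
    rcases le_or_gt (t % L + 2) L with hcase | hcase
    · have h2 : q (t + 2) = g ^ (t / L) • A.getVert (t % L + 2) := by
        conv_lhs => rw [show t + 2 = L * (t / L) + (t % L + 2) by omega]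
        exact hqform _ _ hcase
      rw [h1, h2]
      intro heq
      have := smul_left_cancel _ heq
      have := aux_getVert_injOn hAp _ (by omega) _ (by omega) this
      omega
    · -- t % L = L - 1
      have hrL : t % L = L - 1 := by omega
      have h2 : q (t + 2) = g ^ (t / L + 1) • A.getVert 1 := by
        conv_lhs => rw [show t + 2 = L * (t / L + 1) + 1 by
          have h5 : L * (t / L + 1) = L * (t / L) + L := by ring
          omega]
        exact hqform _ _ (by omega)
      rw [h1, h2, hrL]
      intro heq
      rw [pow_succ, mul_smul] at heq
      exact hcoh (smul_left_cancel _ heq).symm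

  have hray := aux_ray hc hA q hadj hred (m * L)
  have hq0 : q 0 = a := by
    have := hqform 0 0 (by omega)
    simpa using this
  have hqm : q (m * L) = g ^ m • a := by
    have := hqform m 0 (by omega)
    simpa [Nat.mul_comm] using this
  rw [hq0, hqm] at hray
  exact hray

lemma aux_nofix (hc : G.Connected) (hA : G.IsAcyclic)
    (hAdj : ∀ (γ : Γ) (u v : V), G.Adj u v → G.Adj (γ • u) (γ • v))
    (g : Γ) (a : V) (A : G.Walk a (g • a)) (hAp : A.IsPath) (hL : 1 ≤ A.length)
    (hcoh : A.getVert (A.length - 1) ≠ g • A.getVert 1) :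
    ∀ y : V, g • y ≠ y := by
  intro y hy
  have hpowfix : ∀ m : ℕ, g ^ m • y = y := by
    intro m
    induction m with
    | zero => simp
    | succ n ih => rw [pow_succ, mul_smul, hy, ih]
  set d := G.dist a y with hd
  have hm := aux_growth hc hA hAdj g a A hAp hL hcoh (2 * d + 1)
  have h1 : G.dist a (g ^ (2*d+1) • a) ≤ d + G.dist y (g ^ (2*d+1) • a) :=
    hc.dist_triangle
  have h2 : G.dist y (g ^ (2*d+1) • a) = d := by
    conv_lhs => rw [← hpowfix (2*d+1)]
    rw [aux_dist_smul hc hAdj, hd, SimpleGraph.dist_comm]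
  have h3 : 2*d+1 ≤ (2*d+1) * A.length := Nat.le_mul_of_pos_right _ hL
  omega

end aux

/-- Let `Γ` act faithfully, without inversion, by automorphisms on a locally
finite tree `T`, with finite quotient and finite edge stabilizers.  Then the
action fails to be `k`-acylindrical for every `k ≥ 1` (i.e. for each `k` some
nontrivial element fixes pointwise a locally injective path of `k` edges) if
and only if there are `h, g ∈ Γ` with `h ≠ 1` having a fixed point, `g`
without fixed point, and `h` and `g` commuting. -/
theorem stmt_6 {V : Type*} (G : SimpleGraph V) (hT : G.IsTree) [G.LocallyFinite]
    (Γ : Type*) [Group Γ] [MulAction Γ V]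
    (hAdj : ∀ (γ : Γ) (u v : V), G.Adj u v → G.Adj (γ • u) (γ • v))
    (hfaith : ∀ γ : Γ, (∀ v : V, γ • v = v) → γ = 1)
    (hnoinv : ∀ (γ : Γ) (u v : V), G.Adj u v → ¬(γ • u = v ∧ γ • v = u))
    (hquot : Finite (Quotient (MulAction.orbitRel Γ V)))
    (hedge : ∀ u v : V, G.Adj u v → Finite {γ : Γ // γ • u = u ∧ γ • v = v}) :
    (∀ k : ℕ, 1 ≤ k → ∃ (p : ℕ → V) (γ : Γ), γ ≠ 1 ∧
        (∀ i < k, G.Adj (p i) (p (i + 1))) ∧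
        (∀ i : ℕ, i + 2 ≤ k → p (i + 2) ≠ p i) ∧
        (∀ i ≤ k, γ • p i = p i)) ↔
      ∃ h g : Γ, h ≠ 1 ∧ (∃ x : V, h • x = x) ∧ (∀ y : V, g • y ≠ y) ∧
        h * g = g * h := by
  classical
  have hc : G.Connected := hT.isConnected
  have hA : G.IsAcyclic := hT.2
  constructor
  · intro hLHS
    have hstab : ∀ u v : V, G.Adj u v →
        ({γ : Γ | γ • u = u ∧ γ • v = v} : Set Γ).Finite := by
      intro u v h
      haveI : Finite ↥({γ : Γ | γ • u = u ∧ γ • v = v} : Set Γ) := hedge u v h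
      exact Set.toFinite _
    set Q := Quotient (MulAction.orbitRel Γ V) with hQ
    let outV : Q → V := Quotient.out
    have hmove : ∀ u : V, ∃ δ : Γ, δ • u = outV ⟦u⟧ := by
      intro u
      have h1 : (MulAction.orbitRel Γ V) (⟦u⟧ : Q).out u := Quotient.mk_out u
      rw [MulAction.orbitRel_apply, MulAction.mem_orbit_iff] at h1
      exact h1
    choose δf hδf using hmove
    set T' : Set (V × V × Γ) := {x | (∃ q : Q, outV q = x.1) ∧ G.Adj x.1 x.2.1 ∧
      x.2.2 • x.1 = x.1 ∧ x.2.2 • x.2.1 = x.2.1} with hT'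
    have hT'fin : T'.Finite := by
      apply Set.Finite.subset (s := ⋃ (q : Q), ⋃ v ∈ G.neighborSet (outV q),
        ({outV q} ×ˢ ({v} ×ˢ {γ : Γ | γ • outV q = outV q ∧ γ • v = v})))
      · apply Set.finite_iUnion
        intro q
        apply Set.Finite.biUnion ((G.neighborSet (outV q)).toFinite)
        intro v hv
        exact (Set.finite_singleton _).prod ((Set.finite_singleton _).prod (hstab _ _ hv))
      · rintro ⟨u, v, γ⟩ ⟨⟨qq, hq⟩, hadj, h1, h2⟩
        simp only [Set.mem_iUnion, Set.mem_prod, Set.mem_singleton_iff, Set.mem_setOf_eq]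
        subst hq
        exact ⟨qq, v, hadj, rfl, rfl, h1, h2⟩
    set N := hT'fin.toFinset.card with hN
    obtain ⟨p, γ, hγ1, hpadj, hpred, hpfix⟩ := hLHS (N + 2) (by omega)
    set f : ℕ → V × V × Γ := fun i =>
      (δf (p i) • p i, δf (p i) • p (i+1), δf (p i) * γ * (δf (p i))⁻¹) with hf
    have hmaps : ∀ i ∈ Finset.range (N+1), f i ∈ hT'fin.toFinset := by
      intro i hi
      rw [Set.Finite.mem_toFinset]
      rw [Finset.mem_range] at hi
      have hadj : G.Adj (p i) (p (i+1)) := hpadj i (by omega)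
      refine ⟨⟨⟦p i⟧, (hδf (p i)).symm⟩, hAdj _ _ _ hadj, ?_, ?_⟩
      · show (δf (p i) * γ * (δf (p i))⁻¹) • (δf (p i) • p i) = δf (p i) • p i
        rw [mul_smul, mul_smul, inv_smul_smul, hpfix i (by omega)]
      · show (δf (p i) * γ * (δf (p i))⁻¹) • (δf (p i) • p (i+1)) = δf (p i) • p (i+1)
        rw [mul_smul, mul_smul, inv_smul_smul, hpfix (i+1) (by omega)]
    obtain ⟨a1, ha1, a2, ha2, hne12, hfeq⟩ :=
      Finset.exists_ne_map_eq_of_card_lt_of_maps_to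
        (t := hT'fin.toFinset) (by simp [hN]) hmaps
    rw [Finset.mem_range] at ha1 ha2
    obtain ⟨i, j, hij, hjN, hfij⟩ : ∃ i j, i < j ∧ j ≤ N ∧ f i = f j := by
      rcases lt_or_gt_of_ne hne12 with hlt | hgt
      · exact ⟨a1, a2, hlt, by omega, hfeq⟩
      · exact ⟨a2, a1, hgt, by omega, hfeq.symm⟩
    have e1 : δf (p i) • p i = δf (p j) • p j := congrArg Prod.fst hfij
    have e2 : δf (p i) • p (i+1) = δf (p j) • p (j+1) :=
      congrArg (fun x => x.2.1) hfij
    have e3 : δf (p i) * γ * (δf (p i))⁻¹ = δf (p j) * γ * (δf (p j))⁻¹ :=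
      congrArg (fun x => x.2.2) hfij
    set g : Γ := (δf (p j))⁻¹ * δf (p i) with hg
    have hgi : g • p i = p j := by
      rw [hg, mul_smul, e1, inv_smul_smul]
    have hgi1 : g • p (i+1) = p (j+1) := by
      rw [hg, mul_smul, e2, inv_smul_smul]
    have hcom : γ * g = g * γ := by
      have h9 : (δf (p j))⁻¹ * (δf (p i) * γ * (δf (p i))⁻¹) * δf (p i) =
          (δf (p j))⁻¹ * (δf (p j) * γ * (δf (p j))⁻¹) * δf (p i) := by rw [e3]
      rw [hg]
      group at h9 ⊢
      rw [h9]
    obtain ⟨w0, hw0len, hw0gv⟩ := aux_walkOfFn (G := G) p i (j - i)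
      (fun s hs => hpadj (i+s) (by omega))
    set A : G.Walk (p i) (g • p i) :=
      w0.copy rfl (by rw [show i + (j-i) = j by omega, ← hgi]) with hA2
    have hAgv : ∀ s ≤ j - i, A.getVert s = p (i + s) := by
      intro s hs
      rw [hA2, Walk.getVert_copy]
      exact hw0gv s hs
    have hAlen : A.length = j - i := by
      rw [hA2, Walk.length_copy, hw0len]
    have hApath : A.IsPath := by
      apply aux_reduced_isPath hA
      intro s hs
      rw [hAlen] at hs
      rw [hAgv (s+2) hs, hAgv s (by omega)]
      simpa [show i+(s+2) = i+s+2 from by omega] using hpred (i+s) (by omega)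
    have hL1 : 1 ≤ A.length := by omega
    have hcoh : A.getVert (A.length - 1) ≠ g • A.getVert 1 := by
      rw [hAlen, hAgv (j-i-1) (by omega), hAgv 1 (by omega), hgi1]
      have hne' := hpred (j-1) (by omega)
      rw [show j-1+2 = j+1 from by omega] at hne'
      rw [show i+(j-i-1) = j-1 from by omega]
      exact fun heq => hne' heq.symm
    have hnof := aux_nofix hc hA hAdj g (p i) A hApath hL1 hcoh
    exact ⟨γ, g, hγ1, ⟨p 0, hpfix 0 (by omega)⟩, hnof, hcom⟩
  · -- backward direction
    rintro ⟨h, g, hne, ⟨x, hx⟩, hgfree, hcomm⟩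
    intro k hk
    -- minimal displacement of g
    obtain ⟨x0, hx0⟩ : ∃ x0 : V, G.dist x0 (g • x0) =
        sInf (Set.range fun v : V => G.dist v (g • v)) := by
      have hne' : (Set.range fun v : V => G.dist v (g • v)).Nonempty := by
        obtain ⟨v⟩ := hc.nonempty
        exact ⟨_, ⟨v, rfl⟩⟩
      obtain ⟨v, hv⟩ := Nat.sInf_mem hne'
      exact ⟨v, hv⟩
    set L := sInf (Set.range fun v : V => G.dist v (g • v)) with hLdef
    have hmin : ∀ v : V, L ≤ G.dist v (g • v) := fun v => Nat.sInf_le ⟨v, rfl⟩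
    have hL1 : 1 ≤ L := by
      by_contra hcon
      have hL0 : L = 0 := by omega
      rw [hL0] at hx0
      exact hgfree x0 ((hc.dist_eq_zero_iff.mp hx0).symm)
    -- the path from x0 to g • x0
    obtain ⟨A, hAp, hAlen⟩ := hc.exists_path_of_dist x0 (g • x0)
    rw [hx0.symm] at hL1 hmin
    have hALlen : A.length = G.dist x0 (g • x0) := hAlen
    have hcoh : A.getVert (A.length - 1) ≠ g • A.getVert 1 := by
      intro heq
      rcases eq_or_lt_of_le (hALlen ▸ hL1) with h1 | h2
      · -- length 1 : inversion
        have hlen1 : A.length = 1 := by omega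
        have h1' : A.getVert 1 = g • x0 := by
          rw [show (1:ℕ) = A.length from hlen1.symm, A.getVert_length]
        have hadj : G.Adj x0 (g • x0) := by
          have := A.adj_getVert_succ (i := 0) (by omega)
          simpa [h1'] using this
        apply hnoinv g x0 (g • x0) hadj
        constructor
        · rfl
        · -- g • (g • x0) = x0
          have h0 : A.getVert 0 = x0 := A.getVert_zero
          rw [hlen1] at heq
          simp only [h0, h1'] at heq
          exact heq.symm
      · -- length ≥ 2 : shorter displacement
        have hlen2 : 2 ≤ A.length := by omega
        have hb : G.dist (A.getVert 1) (g • A.getVert 1) ≤ A.length - 2 := by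
          rw [← heq]
          have := aux_dist_getVert_le hc A 1 (A.length - 1) (by omega) (by omega)
          omega
        have := hmin (A.getVert 1)
        rw [hALlen] at hb
        omega
    have hgrow := aux_growth hc hA hAdj g x0 A hAp (hALlen ▸ hL1) hcoh
    rw [hALlen] at hgrow
    -- choose n large
    set D0 := G.dist x x0 with hD0
    set n := k + 2 * D0 with hn
    have hdist : k ≤ G.dist x (g ^ n • x) := by
      have t0 : G.dist x0 x = D0 := by rw [hD0, SimpleGraph.dist_comm]
      have t1 : G.dist x0 (g ^ n • x0) ≤ G.dist x0 x + G.dist x (g ^ n • x0) :=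
        hc.dist_triangle (v := x)
      have t2 : G.dist x (g ^ n • x0) ≤ G.dist x (g ^ n • x) +
          G.dist (g ^ n • x) (g ^ n • x0) := hc.dist_triangle (v := g ^ n • x)
      have t3 : G.dist (g ^ n • x) (g ^ n • x0) = D0 := by
        rw [aux_dist_smul hc hAdj, hD0]
      have t4 := hgrow n
      have t5 : n ≤ n * G.dist x0 (g • x0) :=
        Nat.le_mul_of_pos_right _ (by omega)
      omega
    -- the path from x to g ^ n • x is fixed by h
    obtain ⟨P, hPp, hPlen⟩ := hc.exists_path_of_dist x (g ^ n • x)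
    have hfixend : h • (g ^ n • x) = g ^ n • x := by
      have hcommn : h * g ^ n = g ^ n * h := (Commute.pow_right hcomm n)
      rw [← mul_smul, hcommn, mul_smul, hx]
    have hfix : ∀ i : ℕ, h • P.getVert i = P.getVert i := by
      have hQ : ((P.map (auxHom hAdj h)).copy hx hfixend) = P := by
        have hQp : ((P.map (auxHom hAdj h)).copy hx hfixend).IsPath := by
          refine (Walk.isPath_copy _ _ _).2 ?_
          exact Walk.map_isPath_of_injective (MulAction.injective h) hPp
        have := hA.path_unique ⟨_, hQp⟩ ⟨P, hPp⟩
        exact congrArg Subtype.val this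
      intro i
      conv_rhs => rw [← hQ]
      exact ((Walk.getVert_copy ..).trans (aux_getVert_map (auxHom hAdj h) P i)).symm
    refine ⟨P.getVert, h, hne, ?_, ?_, fun i _ => hfix i⟩
    · intro i hik
      exact P.adj_getVert_succ (by omega)
    · intro i hik
      intro heq
      have := aux_getVert_injOn hPp (i + 2) (by omega) i (by omega) heq
      omega
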